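/- Let F ∈ ℝ^{3×3} have proper singular value decomposition F = USVᵀ with S = diag[s₁,s₂,s₃], s₁ ≥ s₂ ≥ |s₃| ≥ 0. Then for every R ∈ SO(3), tr(Fᵀ R) ≤ s₁ + s₂ + s₃, with equality attained at R = UVᵀ. Consequently, the matrix Fisher density p(R) = exp(tr(FᵀR))/c(F) attains its maximum over SO(3) at R = UVᵀ. -/

import Mathlib

open MeasureTheory Matrix Real

noncomputable section

/-- The space of real 3×3 matrices. -/
abbrev M3 : Type := Matrix (Fin 3) (Fin 3) ℝ

instance : MeasurableSpace M3 := inferInstanceAs (MeasurableSpace (Fin 3 → Fin 3 → ℝ))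

/-- The special orthogonal group SO(3), as a set of real 3×3 matrices. -/
def SO3 : Set M3 := {R | Rᵀ * R = 1 ∧ R.det = 1}

/-- The normalizing constant of the matrix Fisher distribution,
`c(F) = ∫_{SO(3)} exp(tr(Fᵀ R)) dR`. -/
noncomputable def mfC (μ : Measure M3) (F : M3) : ℝ :=
  ∫ R, Real.exp (Fᵀ * R).trace ∂μ

lemma so3_trace_ge (Q : M3) (hQ : Q ∈ SO3) : -1 ≤ Q 0 0 + Q 1 1 + Q 2 2 := by
  obtain ⟨horth, hdet⟩ := hQ
  have hinv : Q⁻¹ = Qᵀ := Matrix.inv_eq_left_inv horth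
  have hadj : Qᵀ = Matrix.adjugate Q := by
    rw [← hinv, Matrix.inv_def, hdet]; simp
  have hrow : Q * Qᵀ = 1 := mul_eq_one_comm.mpr horth
  have r1 := congr_fun (congr_fun hrow 0) 0
  have r2 := congr_fun (congr_fun hrow 1) 1
  have r3 := congr_fun (congr_fun hrow 2) 2
  simp [Matrix.mul_apply, Fin.sum_univ_three, Matrix.one_apply, Matrix.transpose_apply] at r1 r2 r3
  have ka := congr_fun (congr_fun hadj 0) 0
  have ke := congr_fun (congr_fun hadj 1) 1
  have ki := congr_fun (congr_fun hadj 2) 2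
  rw [Matrix.adjugate_fin_three] at ka ke ki
  simp [Matrix.transpose_apply] at ka ke ki
  nlinarith [sq_nonneg (1 + QA), sq_nonneg (Q 0 1 - Q 1 0),
    sq_nonneg (Q 0 2 - Q 2 0), sq_nonneg (Q 1 2 - Q 2 1), r1, r2, r3, ka, ke, ki]
where QA := Q 0 0 + Q 1 1 + Q 2 2

lemma so3_mul (A B : M3) (hA : A ∈ SO3) (hB : B ∈ SO3) : A * B ∈ SO3 := by
  constructor
  · rw [Matrix.transpose_mul]
    calc Bᵀ * Aᵀ * (A * B) = Bᵀ * (Aᵀ * A) * B := by noncomm_ring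
    _ = 1 := by rw [hA.1, Matrix.mul_one, hB.1]
  · rw [Matrix.det_mul, hA.2, hB.2, mul_one]

lemma negdiag_so3 : Matrix.diagonal ![(-1 : ℝ), -1, 1] ∈ SO3 := by
  constructor
  · rw [Matrix.diagonal_transpose, Matrix.diagonal_mul_diagonal]
    ext i j
    fin_cases i <;> fin_cases j <;> simp [Matrix.diagonal, Matrix.one_apply]
  · rw [Matrix.det_diagonal, Fin.prod_univ_three]; norm_num; rfl

-- diagonal sum bound
lemma so3_diag_bound (Q : M3) (hQ : Q ∈ SO3) (s₁ s₂ s₃ : ℝ)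
    (h12 : s₁ ≥ s₂) (h23 : s₂ ≥ |s₃|) :
    s₁ * Q 0 0 + s₂ * Q 1 1 + s₃ * Q 2 2 ≤ s₁ + s₂ + s₃ := by
  have hcol := hQ.1
  have c1 := congr_fun (congr_fun hcol 0) 0
  have c2 := congr_fun (congr_fun hcol 1) 1
  have c3 := congr_fun (congr_fun hcol 2) 2
  simp [Matrix.mul_apply, Fin.sum_univ_three, Matrix.one_apply, Matrix.transpose_apply] at c1 c2 c3
  have ha : Q 0 0 ≤ 1 := by nlinarith [c1]
  have he : Q 1 1 ≤ 1 := by nlinarith [c2]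
  have hi : Q 2 2 ≤ 1 := by nlinarith [c3]
  have htr : -1 ≤ Q 0 0 + Q 1 1 + Q 2 2 := so3_trace_ge Q hQ
  -- a + e - i ≤ 1
  have hQ' := so3_mul Q _ hQ negdiag_so3
  have htr' := so3_trace_ge _ hQ'
  simp [Matrix.mul_diagonal] at htr'
  have hflip : Q 0 0 + Q 1 1 - Q 2 2 ≤ 1 := by linarith
  have habs := abs_le.mp h23
  have hs2 : (0:ℝ) ≤ s₂ := le_trans (abs_nonneg s₃) h23
  have hs1 : (0:ℝ) ≤ s₁ := le_trans hs2 h12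
  rcases le_or_gt 0 s₃ with hs3 | hs3
  · nlinarith [mul_nonneg (sub_nonneg.2 h12) (sub_nonneg.2 ha),
      mul_nonneg (sub_nonneg.2 habs.2) (by linarith : (0:ℝ) ≤ 2 - Q 0 0 - Q 1 1),
      mul_nonneg hs3 (by linarith : (0:ℝ) ≤ 3 - (Q 0 0 + Q 1 1 + Q 2 2))]
  · nlinarith [mul_nonneg (sub_nonneg.2 h12) (sub_nonneg.2 ha),
      mul_nonneg (by linarith : (0:ℝ) ≤ s₂ + s₃) (by linarith : (0:ℝ) ≤ 2 - Q 0 0 - Q 1 1),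
      mul_nonneg (by linarith : (0:ℝ) ≤ -s₃) (by linarith : (0:ℝ) ≤ 1 - (Q 0 0 + Q 1 1 - Q 2 2))]

/-- Let `F = U S Vᵀ` be a proper singular value decomposition
(`U, V ∈ SO(3)`, `S = diag[s₁,s₂,s₃]`, `s₁ ≥ s₂ ≥ |s₃| ≥ 0`).  Then for every
`R ∈ SO(3)`, `tr(Fᵀ R) ≤ s₁ + s₂ + s₃`, with equality at `R = U Vᵀ`.
Consequently, the matrix Fisher density `p(R) = exp(tr(FᵀR))/c(F)` attains its
maximum over SO(3) at `R = U Vᵀ`. -/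
theorem matrixFisher_density_max
    (μ : Measure M3) [IsProbabilityMeasure μ] (hsupp : μ SO3ᶜ = 0)
    (hleft : ∀ Q ∈ SO3, μ.map (fun R => Q * R) = μ)
    (hright : ∀ Q ∈ SO3, μ.map (fun R => R * Q) = μ)
    (F U V : M3) (s₁ s₂ s₃ : ℝ)
    (hU : U ∈ SO3) (hV : V ∈ SO3) (h12 : s₁ ≥ s₂) (h23 : s₂ ≥ |s₃|)
    (hF : F = U * Matrix.diagonal ![s₁, s₂, s₃] * Vᵀ) :
    (∀ R ∈ SO3, (Fᵀ * R).trace ≤ s₁ + s₂ + s₃) ∧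
    (Fᵀ * (U * Vᵀ)).trace = s₁ + s₂ + s₃ ∧
    (∀ R ∈ SO3,
      Real.exp (Fᵀ * R).trace / mfC μ F ≤
        Real.exp (Fᵀ * (U * Vᵀ)).trace / mfC μ F) := by
  set D : M3 := Matrix.diagonal ![s₁, s₂, s₃] with hD
  have hFT : Fᵀ = V * D * Uᵀ := by
    rw [hF, Matrix.transpose_mul, Matrix.transpose_mul, Matrix.transpose_transpose,
      Matrix.diagonal_transpose, Matrix.mul_assoc]
  have hUt : Uᵀ ∈ SO3 := by
    refine ⟨?_, by rw [Matrix.det_transpose]; exact hU.2⟩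
    rw [Matrix.transpose_transpose]; exact mul_eq_one_comm.mpr hU.1
  -- general trace formula
  have key : ∀ R : M3, (Fᵀ * R).trace =
      s₁ * (Uᵀ * R * V) 0 0 + s₂ * (Uᵀ * R * V) 1 1 + s₃ * (Uᵀ * R * V) 2 2 := by
    intro R
    have h1 : Fᵀ * R = V * (D * (Uᵀ * R)) := by rw [hFT]; noncomm_ring
    rw [h1, Matrix.trace_mul_comm]
    have h2 : D * (Uᵀ * R) * V = D * (Uᵀ * R * V) := by noncomm_ring
    rw [h2]
    set Q := Uᵀ * R * V
    simp [Matrix.trace, Matrix.diag, Matrix.diagonal_mul, Fin.sum_univ_three, hD]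
  have part1 : ∀ R ∈ SO3, (Fᵀ * R).trace ≤ s₁ + s₂ + s₃ := by
    intro R hR
    rw [key R]
    exact so3_diag_bound _ (so3_mul _ _ (so3_mul _ _ hUt hR) hV) s₁ s₂ s₃ h12 h23
  have part2 : (Fᵀ * (U * Vᵀ)).trace = s₁ + s₂ + s₃ := by
    rw [key]
    have hq : Uᵀ * (U * Vᵀ) * V = 1 := by
      rw [← Matrix.mul_assoc, hU.1, Matrix.one_mul, hV.1]
    rw [hq]
    norm_num [Matrix.one_apply]
  refine ⟨part1, part2, ?_⟩
  intro R hR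
  have hexp : Real.exp (Fᵀ * R).trace ≤ Real.exp (Fᵀ * (U * Vᵀ)).trace := by
    rw [Real.exp_le_exp, part2]; exact part1 R hR
  have hc : 0 ≤ mfC μ F := integral_nonneg fun R => Real.exp_nonneg _
  exact div_le_div_of_nonneg_right hexp hc

end
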